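/- Suppose (A, B) is ε-regular with density d ≥ 2ε, |A| = |B| = m, and let k ≤ (1 − 3ε)m. Then for any set of k vertices a₁, …, a_k ∈ A, avoiding at most εm exceptional vertices of A, one can greedily choose distinct neighbors b₁, …, b_k ∈ B with aᵢbᵢ ∈ E(G) for all i, provided (d − ε)m ≥ k + εm. -/

import Mathlib

open Finset SimpleGraph
open scoped Classical

/-- A pair `(A, B)` of vertex sets is `ε`-regular: for all `X ⊆ A`, `Y ⊆ B` with
`|X| ≥ ε|A|`, `|Y| ≥ ε|B|`, the densities satisfy `|d(X,Y) − d(A,B)| ≤ ε`. -/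
def IsRegularPair {V : Type*} (G : SimpleGraph V) [DecidableRel G.Adj]
    (ε : ℝ) (A B : Finset V) : Prop :=
  ∀ X ⊆ A, ∀ Y ⊆ B, ε * A.card ≤ X.card → ε * B.card ≤ Y.card →
    |(G.edgeDensity X Y : ℝ) - (G.edgeDensity A B : ℝ)| ≤ ε

theorem stmt_11 {V : Type*} [DecidableEq V] (G : SimpleGraph V) [DecidableRel G.Adj]
    (ε : ℝ) (m k : ℕ) (A B : Finset V)
    (hA : A.card = m) (hB : B.card = m)
    (hreg : IsRegularPair G ε A B)
    (d : ℝ) (hd : d = (G.edgeDensity A B : ℝ)) (hdε : 2 * ε ≤ d)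
    (hk : (k : ℝ) ≤ (1 - 3 * ε) * m)
    (hgreedy : (k : ℝ) + ε * m ≤ (d - ε) * m) :
    ∃ Exc ⊆ A, (Exc.card : ℝ) ≤ ε * m ∧
      ∀ a : Fin k → V, Function.Injective a → (∀ i, a i ∈ A \ Exc) →
        ∃ b : Fin k → V, Function.Injective b ∧
          ∀ i, b i ∈ B ∧ G.Adj (a i) (b i) := by
  -- ε is nonnegative
  have hm0 : (0:ℝ) ≤ m := Nat.cast_nonneg m
  have hε0 : 0 ≤ ε := by
    by_contra h
    push_neg at h
    have := hreg A (subset_refl A) B (subset_refl B)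
      (by rw [hA]; nlinarith) (by rw [hB]; nlinarith)
    simp at this
    linarith
  rcases Nat.eq_zero_or_pos k with hk0 | hkpos
  · subst hk0
    refine ⟨∅, empty_subset _, by simpa using mul_nonneg hε0 hm0, ?_⟩
    intro a _ _
    exact ⟨fun i => i.elim0, fun i => i.elim0, fun i => i.elim0⟩
  -- now k ≥ 1, hence m ≥ 1 and ε < 1/3
  have hk1 : (1:ℝ) ≤ k := by exact_mod_cast hkpos
  have hm1 : (1:ℝ) ≤ m := by nlinarith
  have hε3 : 3 * ε * m ≤ m - 1 := by nlinarith
  set Exc : Finset V := A.filter (fun a => ((B.filter (G.Adj a)).card : ℝ) < (d - ε) * m)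
    with hExc
  have hExcA : Exc ⊆ A := filter_subset _ _
  refine ⟨Exc, hExcA, ?_, ?_⟩
  · -- |Exc| ≤ εm
    by_contra hbig
    push_neg at hbig
    have hreg' := hreg Exc hExcA B (subset_refl B)
      (by rw [hA]; exact le_of_lt hbig) (by rw [hB]; nlinarith)
    rw [← hd] at hreg'
    have hlow : d - ε ≤ (G.edgeDensity Exc B : ℝ) := by
      have := abs_le.mp hreg'
      linarith [this.1]
    -- upper bound on density
    have hExcne : 0 < (Exc.card : ℝ) := lt_of_le_of_lt (mul_nonneg hε0 hm0) hbig
    have hsum : #(G.interedges Exc B) = ∑ a ∈ Exc, #(B.filter (G.Adj a)) := by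
      rw [SimpleGraph.interedges, Rel.interedges_eq_biUnion, card_biUnion]
      · simp
      · intro x hx y hy hxy
        simp only [Finset.disjoint_left, mem_map, mem_filter, Function.Embedding.coeFn_mk]
        rintro e ⟨u, hu, rfl⟩ ⟨v, hv, hev⟩
        exact hxy (by injection hev with h1 h2; exact h1.symm)
    have hsumlt : (#(G.interedges Exc B) : ℝ) < Exc.card * ((d - ε) * m) := by
      rw [hsum]
      push_cast
      calc (∑ a ∈ Exc, (#(B.filter (G.Adj a)) : ℝ))
          < ∑ a ∈ Exc, (d - ε) * m := by
            apply sum_lt_sum_of_nonempty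
            · exact card_pos.mp (by exact_mod_cast hExcne)
            · intro a ha
              exact (mem_filter.mp ha).2
        _ = Exc.card * ((d - ε) * m) := by rw [sum_const, nsmul_eq_mul]
    have hdens : (G.edgeDensity Exc B : ℝ) = #(G.interedges Exc B) / (Exc.card * B.card) := by
      rw [SimpleGraph.edgeDensity_def]
      push_cast
      ring
    rw [hdens, hB] at hlow
    have hpos : (0:ℝ) < Exc.card * m := by positivity
    have := (le_div_iff₀ hpos).mp hlow
    nlinarith
  · -- greedy / Hall
    intro a hainj ha
    have hdeg : ∀ i : Fin k, k ≤ #(B.filter (G.Adj (a i))) := by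
      intro i
      have hai := ha i
      rw [mem_sdiff, hExc, mem_filter] at hai
      have h2 : ¬ ((#(B.filter (G.Adj (a i))) : ℝ) < (d - ε) * m) := by
        intro hc
        exact hai.2 ⟨hai.1, hc⟩
      push_neg at h2
      have : (k:ℝ) ≤ #(B.filter (G.Adj (a i))) := by nlinarith [mul_nonneg hε0 hm0]
      exact_mod_cast this
    have hall : ∀ s : Finset (Fin k), #s ≤ #(s.biUnion (fun i => B.filter (G.Adj (a i)))) := by
      intro s
      rcases s.eq_empty_or_nonempty with rfl | ⟨i, hi⟩
      · simp
      · calc #s ≤ k := by simpa using card_le_card (subset_univ s)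
          _ ≤ #(B.filter (G.Adj (a i))) := hdeg i
          _ ≤ #(s.biUnion (fun i => B.filter (G.Adj (a i)))) :=
            card_le_card (subset_biUnion_of_mem (fun j => B.filter (G.Adj (a j))) hi)
    obtain ⟨b, hbinj, hb⟩ :=
      (Finset.all_card_le_biUnion_card_iff_exists_injective _).mp hall
    refine ⟨b, hbinj, fun i => ?_⟩
    have := hb i
    rw [mem_filter] at this
    exact this
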